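/- (Interpolation inequality for smooth strongly convex functions) If f : ℝ^d → ℝ is L-smooth and μ-strongly convex with 0 ≤ μ < L, then for all x, y: f(x) ≥ f(y) + ⟨f'(y), x - y⟩ + (1/(2(1 - μ/L)))·( (1/L)‖f'(x) - f'(y)‖² + μ‖x - y‖² - (2μ/L)⟨f'(x) - f'(y), x - y⟩ ). -/

import Mathlib

open Finset

section Helpers

open InnerProductSpace Set

variable {E : Type*} [NormedAddCommGroup E] [InnerProductSpace ℝ E] [CompleteSpace E]

lemma convex_first_order {g : E → ℝ} {g'x : E} {x z : E}
    (hg : ConvexOn ℝ Set.univ g) (hx : HasGradientAt g g'x x) :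
    g x + (inner ℝ g'x (z - x) : ℝ) ≤ g z := by
  set v := z - x with hv
  have hline : HasDerivAt (fun t : ℝ => x + t • v) v 0 := by
    simpa using ((hasDerivAt_id (0:ℝ)).smul_const v).const_add x
  have hx' : HasFDerivAt g ((toDual ℝ E) g'x) (x + (0:ℝ) • v) := by
    simpa using hx.hasFDerivAt
  have hφ : HasDerivAt (fun t : ℝ => g (x + t • v)) (inner ℝ g'x v : ℝ) 0 := by
    simpa [toDual_apply_apply, Function.comp_def] using hx'.comp_hasDerivAt 0 hline
  have hslope : Filter.Tendsto (slope (fun t : ℝ => g (x + t • v)) 0) (nhdsWithin 0 (Set.Ioi 0))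
      (nhds (inner ℝ g'x v : ℝ)) :=
    (hasDerivAt_iff_tendsto_slope.mp hφ).mono_left
      (nhdsWithin_mono _ (fun t ht => ne_of_gt ht))
  have hev : ∀ᶠ t in nhdsWithin (0:ℝ) (Set.Ioi 0),
      slope (fun t : ℝ => g (x + t • v)) 0 t ≤ g z - g x := by
    filter_upwards [Ioc_mem_nhdsGT_of_mem (by norm_num : (0:ℝ) ∈ Set.Ico (0:ℝ) 1)]
      with t ht
    have ht0 : 0 < t := ht.1
    have hpt : (1 - t) • x + t • z = x + t • v := by
      rw [hv, smul_sub, sub_smul]; module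
    have key : g (x + t • v) ≤ g x + t * (g z - g x) := by
      have h2 := hg.2 (Set.mem_univ x) (Set.mem_univ z)
        (by linarith [ht.2] : (0:ℝ) ≤ 1 - t) ht0.le (by ring)
      rw [hpt] at h2
      have : (1 - t) • g x + t • g z = g x + t * (g z - g x) := by
        simp [smul_eq_mul]; ring
      linarith [h2.trans_eq this]
    rw [slope_def_field]
    simp only [zero_smul, add_zero, sub_zero]
    rw [div_le_iff₀ ht0]
    linarith
  have := le_of_tendsto hslope hev
  linarith

lemma descent_lemma {f : E → ℝ} {f' : E → E} {L : ℝ} (hL : 0 ≤ L)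
    (hgrad : ∀ x, HasGradientAt f (f' x) x)
    (hsmooth : ∀ x y, ‖f' x - f' y‖ ≤ L * ‖x - y‖) (x y : E) :
    f x ≤ f y + (inner ℝ (f' y) (x - y) : ℝ) + L / 2 * ‖x - y‖ ^ 2 := by
  set s := x - y with hs
  have hlip : LipschitzWith (Real.toNNReal L) f' := by
    apply LipschitzWith.of_dist_le_mul
    intro a b
    rw [dist_eq_norm, dist_eq_norm, Real.coe_toNNReal L hL]
    exact hsmooth a b
  have hφ : ∀ t : ℝ, HasDerivAt (fun t : ℝ => f (y + t • s))
      (inner ℝ (f' (y + t • s)) s : ℝ) t := by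
    intro t
    have hline : HasDerivAt (fun t : ℝ => y + t • s) s t := by
      simpa using ((hasDerivAt_id t).smul_const s).const_add y
    simpa [toDual_apply_apply, Function.comp_def] using
      ((hgrad (y + t • s)).hasFDerivAt).comp_hasDerivAt t hline
  have hcont : Continuous fun t : ℝ => (inner ℝ (f' (y + t • s)) s : ℝ) :=
    Continuous.inner (hlip.continuous.comp (by continuity)) continuous_const
  have hFTC : (∫ t in (0:ℝ)..1, (inner ℝ (f' (y + t • s)) s : ℝ))
      = f (y + (1:ℝ) • s) - f (y + (0:ℝ) • s) :=
    intervalIntegral.integral_eq_sub_of_hasDerivAt (fun t _ => hφ t)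
      (hcont.intervalIntegrable 0 1)
  have hmono : (∫ t in (0:ℝ)..1, (inner ℝ (f' (y + t • s)) s : ℝ))
      ≤ ∫ t in (0:ℝ)..1, ((inner ℝ (f' y) s : ℝ) + (L * ‖s‖ ^ 2) * t) := by
    apply intervalIntegral.integral_mono_on (by norm_num)
      (hcont.intervalIntegrable 0 1)
      ((continuous_const.add (continuous_const.mul continuous_id)).intervalIntegrable 0 1)
    intro t ht
    have h1 : (inner ℝ (f' (y + t • s)) s : ℝ) - (inner ℝ (f' y) s : ℝ)
        = (inner ℝ (f' (y + t • s) - f' y) s : ℝ) := by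
      rw [inner_sub_left]
    have h2 : (inner ℝ (f' (y + t • s) - f' y) s : ℝ) ≤ L * t * ‖s‖ ^ 2 := by
      calc (inner ℝ (f' (y + t • s) - f' y) s : ℝ)
          ≤ ‖f' (y + t • s) - f' y‖ * ‖s‖ := real_inner_le_norm _ _
        _ ≤ (L * ‖(y + t • s) - y‖) * ‖s‖ := by
            exact mul_le_mul_of_nonneg_right (hsmooth _ _) (norm_nonneg _)
        _ = L * t * ‖s‖ ^ 2 := by
            rw [add_sub_cancel_left, norm_smul, Real.norm_eq_abs, abs_of_nonneg ht.1]
            ring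
    simp only [Pi.add_apply, Pi.mul_apply, id_eq]
    nlinarith [h1, h2]
  have hint : (∫ t in (0:ℝ)..1, ((inner ℝ (f' y) s : ℝ) + (L * ‖s‖ ^ 2) * t))
      = (inner ℝ (f' y) s : ℝ) + L / 2 * ‖s‖ ^ 2 := by
    rw [intervalIntegral.integral_add (intervalIntegrable_const)
      ((intervalIntegral.intervalIntegrable_id).const_mul _),
      intervalIntegral.integral_const_mul, integral_id]
    simp; ring
  have hx1 : y + (1:ℝ) • s = x := by rw [hs]; simp
  have hy0 : y + (0:ℝ) • s = y := by simp
  rw [hx1, hy0] at hFTC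
  linarith [hFTC ▸ (hmono.trans_eq hint)]

lemma cocoercivity {g : E → ℝ} {g' : E → E} {K : ℝ} (hK : 0 < K)
    (hgrad : ∀ x, HasGradientAt g (g' x) x)
    (hconv : ConvexOn ℝ Set.univ g)
    (hdes : ∀ u w, g u ≤ g w + (inner ℝ (g' w) (u - w) : ℝ) + K / 2 * ‖u - w‖ ^ 2)
    (x y : E) :
    g x + (inner ℝ (g' x) (y - x) : ℝ) + 1 / (2 * K) * ‖g' x - g' y‖ ^ 2 ≤ g y := by
  set a := g' x with ha
  set b := g' y with hb
  set D := b - a with hD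
  set u := y - K⁻¹ • D with hu
  have h1 : g x + (inner ℝ a (u - x) : ℝ) ≤ g u := convex_first_order hconv (hgrad x)
  have h2 : g u ≤ g y + (inner ℝ b (u - y) : ℝ) + K / 2 * ‖u - y‖ ^ 2 := hdes u y
  have huy : u - y = -(K⁻¹ • D) := by rw [hu]; abel
  have e1 : (inner ℝ b (u - y) : ℝ) = -(K⁻¹ * inner ℝ b D) := by
    rw [huy, inner_neg_right, real_inner_smul_right]
  have e2 : ‖u - y‖ ^ 2 = K⁻¹ ^ 2 * ‖D‖ ^ 2 := by
    rw [huy, norm_neg, norm_smul, Real.norm_eq_abs, abs_of_pos (inv_pos.mpr hK)]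
    ring
  have hux : u - x = (y - x) - K⁻¹ • D := by rw [hu]; abel
  have e3 : (inner ℝ a (u - x) : ℝ) = inner ℝ a (y - x) - K⁻¹ * inner ℝ a D := by
    rw [hux, inner_sub_right, real_inner_smul_right]
  have e4 : (inner ℝ b D : ℝ) - inner ℝ a D = ‖D‖ ^ 2 := by
    rw [← inner_sub_left, ← hD, real_inner_self_eq_norm_sq]
  have e5 : ‖a - b‖ = ‖D‖ := by rw [hD, norm_sub_rev]
  have hc : K * K⁻¹ = 1 := mul_inv_cancel₀ hK.ne'
  have h5 : 1 / (2 * K) = K⁻¹ / 2 := by field_simp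
  have h6 : K / 2 * ‖u - y‖ ^ 2 = K⁻¹ / 2 * ‖D‖ ^ 2 := by
    rw [e2]; field_simp
  have e7 : K⁻¹ * ((inner ℝ b D : ℝ) - inner ℝ a D) = K⁻¹ * ‖D‖ ^ 2 := by rw [e4]
  rw [e5, h5]
  linarith [h1, h2, e1, e3, e7, h6]

lemma hasGradientAt_const_mul_norm_sq (μ : ℝ) (z : E) :
    HasGradientAt (fun w : E => μ / 2 * ‖w‖ ^ 2) (μ • z) z := by
  have h : HasFDerivAt (fun w : E => (inner ℝ w w : ℝ))
      ((fderivInnerCLM ℝ (z, z)).comp ((ContinuousLinearMap.id ℝ E).prod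
        (ContinuousLinearMap.id ℝ E))) z :=
    (hasFDerivAt_id z).inner ℝ (hasFDerivAt_id z)
  have h2 : HasFDerivAt (fun w : E => μ / 2 * ‖w‖ ^ 2)
      ((μ / 2) • ((fderivInnerCLM ℝ (z, z)).comp ((ContinuousLinearMap.id ℝ E).prod
        (ContinuousLinearMap.id ℝ E)))) z := by
    have := h.const_mul (μ / 2)
    apply this.congr_of_eventuallyEq
    filter_upwards with w
    rw [real_inner_self_eq_norm_sq]
  have heq : (InnerProductSpace.toDual ℝ E) (μ • z)
      = (μ / 2) • ((fderivInnerCLM ℝ (z, z)).comp ((ContinuousLinearMap.id ℝ E).prod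
        (ContinuousLinearMap.id ℝ E))) := by
    apply ContinuousLinearMap.ext
    intro w
    simp [fderivInnerCLM_apply, real_inner_smul_left, real_inner_comm z w]
    ring
  exact hasGradientAt_iff_hasFDerivAt.mpr (heq ▸ h2)

end Helpers

/-- Interpolation inequality for L-smooth μ-strongly convex functions
(μ-strong convexity meaning `f - (μ/2)‖·‖²` is convex; μ = 0 is allowed). -/
theorem smooth_strongly_convex_interpolation {d : ℕ} (L μ : ℝ)
    (hμ : 0 ≤ μ) (hμL : μ < L)
    (f : EuclideanSpace ℝ (Fin d) → ℝ)
    (f' : EuclideanSpace ℝ (Fin d) → EuclideanSpace ℝ (Fin d))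
    (hgrad : ∀ x, HasGradientAt f (f' x) x)
    (hsc : ConvexOn ℝ Set.univ (fun x => f x - μ / 2 * ‖x‖ ^ 2))
    (hsmooth : ∀ x y, ‖f' x - f' y‖ ≤ L * ‖x - y‖) :
    ∀ x y : EuclideanSpace ℝ (Fin d),
      f x ≥ f y + (inner ℝ (f' y) (x - y) : ℝ)
        + 1 / (2 * (1 - μ / L)) *
          ((1 / L) * ‖f' x - f' y‖ ^ 2 + μ * ‖x - y‖ ^ 2
            - (2 * μ / L) * (inner ℝ (f' x - f' y) (x - y) : ℝ)) := by
  intro x y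
  have hL : 0 < L := lt_of_le_of_lt hμ hμL
  have hK : 0 < L - μ := by linarith
  set g : EuclideanSpace ℝ (Fin d) → ℝ := fun z => f z - μ / 2 * ‖z‖ ^ 2 with hgdef
  set g' : EuclideanSpace ℝ (Fin d) → EuclideanSpace ℝ (Fin d) :=
    fun z => f' z - μ • z with hg'def
  have hggrad : ∀ z, HasGradientAt g (g' z) z := by
    intro z
    have h := (hgrad z).hasFDerivAt.sub
      (hasGradientAt_const_mul_norm_sq μ z).hasFDerivAt
    exact hasGradientAt_iff_hasFDerivAt.mpr (by simpa [hg'def, hgdef, map_sub, map_smul, Pi.sub_def] using h)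
  have hdes : ∀ u w : EuclideanSpace ℝ (Fin d),
      g u ≤ g w + (inner ℝ (g' w) (u - w) : ℝ) + (L - μ) / 2 * ‖u - w‖ ^ 2 := by
    intro u w
    have hf := descent_lemma hL.le hgrad hsmooth u w
    have hsq : ‖u - w‖ ^ 2 = ‖u‖ ^ 2 - 2 * (inner ℝ u w : ℝ) + ‖w‖ ^ 2 :=
      norm_sub_sq_real u w
    have hinn : (inner ℝ (g' w) (u - w) : ℝ)
        = (inner ℝ (f' w) (u - w) : ℝ) - μ * ((inner ℝ w u : ℝ) - ‖w‖ ^ 2) := by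
      simp only [hg'def, inner_sub_left, inner_sub_right, real_inner_smul_left,
        real_inner_self_eq_norm_sq]
      ring
    have hcomm : (inner ℝ w u : ℝ) = (inner ℝ u w : ℝ) := real_inner_comm u w
    simp only [hgdef]
    rw [hinn, hcomm]
    nlinarith [hf, hsq]
  have hco := cocoercivity hK hggrad hsc hdes y x
  -- translate back to f
  have hdiff : g' y - g' x = -((f' x - f' y) - μ • (x - y)) := by
    simp only [hg'def, smul_sub]
    abel
  have e1 : ‖g' y - g' x‖ ^ 2
      = ‖f' x - f' y‖ ^ 2 - 2 * μ * (inner ℝ (f' x - f' y) (x - y) : ℝ)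
        + μ ^ 2 * ‖x - y‖ ^ 2 := by
    rw [hdiff, norm_neg, norm_sub_sq_real, real_inner_smul_right, norm_smul,
      Real.norm_eq_abs, abs_of_nonneg hμ, mul_pow]
    ring
  have e1' : 1 / (2 * (L - μ)) * ‖g' y - g' x‖ ^ 2
      = 1 / (2 * (L - μ)) * (‖f' x - f' y‖ ^ 2
        - 2 * μ * (inner ℝ (f' x - f' y) (x - y) : ℝ) + μ ^ 2 * ‖x - y‖ ^ 2) := by
    rw [e1]
  have e2 : (inner ℝ (g' y) (x - y) : ℝ)
      = (inner ℝ (f' y) (x - y) : ℝ) - μ * (inner ℝ y (x - y) : ℝ) := by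
    simp only [hg'def]
    rw [inner_sub_left, real_inner_smul_left]
  have hS : ‖x - y‖ ^ 2 = ‖x‖ ^ 2 - 2 * (inner ℝ x y : ℝ) + ‖y‖ ^ 2 :=
    norm_sub_sq_real x y
  have hyx : (inner ℝ y (x - y) : ℝ) = (inner ℝ y x : ℝ) - ‖y‖ ^ 2 := by
    rw [inner_sub_right, real_inner_self_eq_norm_sq]
  have hcomm : (inner ℝ y x : ℝ) = (inner ℝ x y : ℝ) := real_inner_comm x y
  have e3 : μ / 2 * ‖x‖ ^ 2 - μ / 2 * ‖y‖ ^ 2 - μ * (inner ℝ y (x - y) : ℝ)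
      = μ / 2 * ‖x - y‖ ^ 2 := by
    rw [hyx, hcomm, hS]; ring
  have h1ne : 1 - μ / L ≠ 0 := by
    have : μ / L < 1 := (div_lt_one hL).mpr hμL
    linarith
  have key : 1 / (2 * (1 - μ / L)) *
        ((1 / L) * ‖f' x - f' y‖ ^ 2 + μ * ‖x - y‖ ^ 2
          - (2 * μ / L) * (inner ℝ (f' x - f' y) (x - y) : ℝ))
      = μ / 2 * ‖x - y‖ ^ 2 + 1 / (2 * (L - μ)) * (‖f' x - f' y‖ ^ 2
        - 2 * μ * (inner ℝ (f' x - f' y) (x - y) : ℝ) + μ ^ 2 * ‖x - y‖ ^ 2) := by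
    field_simp
    ring
  simp only [hgdef] at hco
  rw [e1', e2] at hco
  rw [ge_iff_le, key]
  linarith [hco, e3]
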